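/- Taking the DFT along the third dimension converts the t-product into slice-wise matrix multiplication: if C = A * B is the t-product of A (n1×n2×n3) and B (n2×n4×n3), then for each frequency index ω ∈ ZMod n3, the ω-th frontal slice of the mode-3 DFT of C equals the matrix product of the ω-th frontal slices of the mode-3 DFTs of A and B. -/

import Mathlib

open Finset Complex
open scoped ComplexOrder

/-- The root `ζ = exp(-2πi/n)` used in the mode-3 DFT. -/
noncomputable def dftRoot (n : ℕ) : ℂ := Complex.exp (-2 * Real.pi * Complex.I / n)

/-- Mode-3 DFT of a third-order tensor: `Â(i,j,ω) = ∑ k, A(i,j,k) ζ^{ωk}`. -/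
noncomputable def dft3 {n1 n2 n3 : ℕ} [NeZero n3]
    (A : Fin n1 → Fin n2 → ZMod n3 → ℂ) (i : Fin n1) (j : Fin n2) (w : ZMod n3) : ℂ :=
  ∑ k : ZMod n3, A i j k * dftRoot n3 ^ (w * k).val

/-- t-product of third-order complex tensors via circular convolution of tubes. -/
noncomputable def tProdC {n1 n2 n4 n3 : ℕ} [NeZero n3]
    (A : Fin n1 → Fin n2 → ZMod n3 → ℂ) (B : Fin n2 → Fin n4 → ZMod n3 → ℂ) :
    Fin n1 → Fin n4 → ZMod n3 → ℂ :=
  fun i j t => ∑ k : Fin n2, ∑ s : ZMod n3, A i k s * B k j (t - s)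

/-- Conjugate tensor transpose: `Aᵀ'(i,j,k) = conj (A(j,i,-k))`. -/
noncomputable def ctT {n1 n2 n3 : ℕ} (A : Fin n1 → Fin n2 → ZMod n3 → ℂ) :
    Fin n2 → Fin n1 → ZMod n3 → ℂ :=
  fun i j k => starRingEnd ℂ (A j i (-k))

/-- The identity tensor: `I(i,i,0) = 1` and zero elsewhere. -/
noncomputable def idTC (n n3 : ℕ) : Fin n → Fin n → ZMod n3 → ℂ :=
  fun i j k => if i = j ∧ k = 0 then 1 else 0

/-- A tensor `Q` is orthogonal if `Qᵀ' * Q = Q * Qᵀ' = I` in the t-product sense. -/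
noncomputable def IsOrthT {n n3 : ℕ} [NeZero n3] (Q : Fin n → Fin n → ZMod n3 → ℂ) : Prop :=
  tProdC (ctT Q) Q = idTC n n3 ∧ tProdC Q (ctT Q) = idTC n n3

/-- The `ω`-th frontal slice of the mode-3 DFT of a tensor. -/
noncomputable def sliceDFT {n1 n2 n3 : ℕ} [NeZero n3]
    (A : Fin n1 → Fin n2 → ZMod n3 → ℂ) (w : ZMod n3) : Matrix (Fin n1) (Fin n2) ℂ :=
  Matrix.of fun i j => dft3 A i j w

/-- Squared Frobenius norm of a third-order tensor. -/
noncomputable def frob2 {n1 n2 n3 : ℕ} [NeZero n3]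
    (A : Fin n1 → Fin n2 → ZMod n3 → ℂ) : ℝ :=
  ∑ i : Fin n1, ∑ j : Fin n2, ∑ k : ZMod n3, ‖A i j k‖ ^ 2

/-- Nuclear norm of a matrix: sum of singular values, i.e. `Re (trace √(Mᴴ M))`. -/
noncomputable def nuclearNorm {m n : Type*} [Fintype m] [Fintype n] [DecidableEq n]
    (M : Matrix m n ℂ) : ℝ :=
  ((Matrix.posSemidef_conjTranspose_mul_self M).1.eigenvectorUnitary.1 *
    Matrix.diagonal (((↑) : ℝ → ℂ) ∘ Real.sqrt ∘ (Matrix.posSemidef_conjTranspose_mul_self M).1.eigenvalues) *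
    (star (Matrix.posSemidef_conjTranspose_mul_self M).1.eigenvectorUnitary : Matrix n n ℂ)).trace.re
lemma dftRoot_pow_self (n : ℕ) [NeZero n] : dftRoot n ^ n = 1 := by
  unfold dftRoot
  rw [← Complex.exp_nat_mul]
  have hn : (n : ℂ) ≠ 0 := Nat.cast_ne_zero.mpr (NeZero.ne n)
  rw [mul_div_assoc', mul_comm, mul_div_assoc, div_self hn, mul_one]
  have : (-2 : ℂ) * Real.pi * Complex.I = -(2 * Real.pi * Complex.I) := by ring
  rw [this, Complex.exp_neg, Complex.exp_two_pi_mul_I, inv_one]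

lemma dftRoot_pow_mod (n : ℕ) [NeZero n] (m : ℕ) :
    dftRoot n ^ (m % n) = dftRoot n ^ m := by
  conv_rhs => rw [← Nat.mod_add_div m n]
  rw [pow_add, pow_mul, dftRoot_pow_self, one_pow, mul_one]

lemma dftRoot_val_add {n : ℕ} [NeZero n] (a b : ZMod n) :
    dftRoot n ^ (a + b).val = dftRoot n ^ a.val * dftRoot n ^ b.val := by
  rw [ZMod.val_add, dftRoot_pow_mod, pow_add]

/-- The mode-3 DFT converts the t-product into slice-wise matrix multiplication. -/
theorem sliceDFT_tProdC {n1 n2 n4 n3 : ℕ} [NeZero n3]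
    (A : Fin n1 → Fin n2 → ZMod n3 → ℂ) (B : Fin n2 → Fin n4 → ZMod n3 → ℂ)
    (w : ZMod n3) :
    sliceDFT (tProdC A B) w = sliceDFT A w * sliceDFT B w := by
  ext i j
  simp only [sliceDFT, Matrix.mul_apply, Matrix.of_apply, dft3, tProdC, Finset.sum_mul]
  rw [Finset.sum_comm]
  refine Finset.sum_congr rfl fun k _ => ?_
  rw [Finset.sum_comm]
  refine Finset.sum_congr rfl fun s _ => ?_
  rw [Finset.mul_sum]
  refine Fintype.sum_equiv (Equiv.subRight s) _ _ fun t => ?_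
  simp only [Equiv.subRight_apply]
  have h : w * t = w * s + w * (t - s) := by ring
  rw [h, dftRoot_val_add]
  ring
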